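/- Suppose p = (α₁₂,α₂₃,α₃₁,γ₁,γ₂,γ₃) ∈ Δ̄∖Δ is badly degenerate (at least one of its five associated triples is a permutation of (0,0,π), and none of its five triples is a permutation of (0,β,π−β) with 0 < β < π). Then there is a permutation (i,j,k) of (1,2,3) such that γᵢ = α_{jk} = π and γⱼ = γₖ = α_{ij} = α_{ki} = 0. -/
import Mathlib


open Real

/-- Membership of `(α₁₂,α₂₃,α₃₁,γ₁,γ₂,γ₃)` in Δ. -/
def InD (a12 a23 a31 g1 g2 g3 : ℝ) : Prop :=
  0 < a12 ∧ 0 < a23 ∧ 0 < a31 ∧ 0 < g1 ∧ 0 < g2 ∧ 0 < g3 ∧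
  g1 + g2 + g3 = π ∧
  g1 + a12 + a31 < π ∧ g2 + a23 + a12 < π ∧ g3 + a31 + a23 < π

/-- Membership of `(α₁₂,α₂₃,α₃₁,γ₁,γ₂,γ₃)` in the closure Δ̄. -/
def InDbar (a12 a23 a31 g1 g2 g3 : ℝ) : Prop :=
  0 ≤ a12 ∧ 0 ≤ a23 ∧ 0 ≤ a31 ∧ 0 ≤ g1 ∧ 0 ≤ g2 ∧ 0 ≤ g3 ∧
  g1 + g2 + g3 = π ∧
  g1 + a12 + a31 ≤ π ∧ g2 + a23 + a12 ≤ π ∧ g3 + a31 + a23 ≤ π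

/-- The five associated ideal-tetrahedron angle triples of a point of ℝ⁶. -/
noncomputable def fiveTriples (a12 a23 a31 g1 g2 g3 : ℝ) : List (List ℝ) :=
  [ [(π + a31 - a12 - g1) / 2, (π + a12 - a23 - g2) / 2, (π + a23 - a31 - g3) / 2],
    [(π - a31 + a12 - g1) / 2, (π - a12 + a23 - g2) / 2, (π - a23 + a31 - g3) / 2],
    [g1, (π + a31 + a12 - g1) / 2, (π - a31 - a12 - g1) / 2],
    [g2, (π + a12 + a23 - g2) / 2, (π - a12 - a23 - g2) / 2],
    [g3, (π + a23 + a31 - g3) / 2, (π - a23 - a31 - g3) / 2] ]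

/-- A triple is badly degenerate: it is a permutation of `(0,0,π)`. -/
def IsBadTriple (l : List ℝ) : Prop := l.Perm [0, 0, π]

/-- A triple is mildly degenerate: a permutation of `(0,β,π−β)` with `0 < β < π`. -/
def IsMildTriple (l : List ℝ) : Prop :=
  ∃ β : ℝ, 0 < β ∧ β < π ∧ l.Perm [0, β, π - β]

lemma bad3 {x y z : ℝ} (h : IsBadTriple [x, y, z]) :
    (x = π ∧ y = 0 ∧ z = 0) ∨ (y = π ∧ x = 0 ∧ z = 0) ∨ (z = π ∧ x = 0 ∧ y = 0) := by
  have hs : x + (y + z) = π := by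
    have := h.sum_eq; simpa using this
  have hx : x = 0 ∨ x = π := by
    have := (h.mem_iff (a := x)).mp (by simp); simpa using this
  have hy : y = 0 ∨ y = π := by
    have := (h.mem_iff (a := y)).mp (by simp); simpa using this
  have hz : z = 0 ∨ z = π := by
    have := (h.mem_iff (a := z)).mp (by simp); simpa using this
  have hπ := pi_pos
  rcases hx with rfl | rfl <;> rcases hy with rfl | rfl <;> rcases hz with rfl | rfl <;>
    first
      | (left; refine ⟨rfl, rfl, rfl⟩)
      | (right; left; refine ⟨rfl, rfl, rfl⟩)
      | (right; right; refine ⟨rfl, rfl, rfl⟩)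
      | linarith

lemma mild_mk1 {x y z β : ℝ} (hx : x = 0) (hy : y = π - β) (hz : z = β)
    (h0 : 0 < β) (h1 : β < π) : IsMildTriple [x, y, z] := by
  refine ⟨β, h0, h1, ?_⟩
  rw [hx, hy, hz]
  exact (List.Perm.swap β (π - β) []).cons 0

lemma mild_mk3 {x y z β : ℝ} (hx : x = β) (hy : y = π - β) (hz : z = 0)
    (h0 : 0 < β) (h1 : β < π) : IsMildTriple [x, y, z] := by
  refine ⟨β, h0, h1, ?_⟩
  rw [hx, hy, hz]
  exact ((List.Perm.swap 0 (π - β) []).cons β).trans (List.Perm.swap 0 β [π - β])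

lemma mild_of_perm {l l' : List ℝ} (h : l.Perm l') (hm : IsMildTriple l') : IsMildTriple l :=
  let ⟨β, h0, h1, hp⟩ := hm; ⟨β, h0, h1, h.trans hp⟩

lemma rot3 (x y z : ℝ) : ([x, y, z] : List ℝ).Perm [y, z, x] :=
  (List.Perm.swap y x [z]).trans ((List.Perm.swap z x []).cons y)

lemma core (a12 a23 a31 g1 g2 g3 : ℝ)
    (h12 : 0 ≤ a12) (h23 : 0 ≤ a23) (h31 : 0 ≤ a31)
    (hg1 : 0 ≤ g1) (hg2 : 0 ≤ g2) (hg3 : 0 ≤ g3)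
    (hsum : g1 + g2 + g3 = π)
    (hc1 : g1 + a12 + a31 ≤ π) (hc2 : g2 + a23 + a12 ≤ π) (hc3 : g3 + a31 + a23 ≤ π)
    (hm1 : ¬ IsMildTriple
      [(π + a31 - a12 - g1) / 2, (π + a12 - a23 - g2) / 2, (π + a23 - a31 - g3) / 2])
    (hm4 : ¬ IsMildTriple [g2, (π + a12 + a23 - g2) / 2, (π - a12 - a23 - g2) / 2])
    (hbad : IsBadTriple [g1, (π + a31 + a12 - g1) / 2, (π - a31 - a12 - g1) / 2]) :
    (g1 = π ∧ a23 = π ∧ g2 = 0 ∧ g3 = 0 ∧ a12 = 0 ∧ a31 = 0) ∨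
    (g2 = π ∧ a31 = π ∧ g3 = 0 ∧ g1 = 0 ∧ a23 = 0 ∧ a12 = 0) ∨
    (g3 = π ∧ a12 = π ∧ g1 = 0 ∧ g2 = 0 ∧ a31 = 0 ∧ a23 = 0) := by
  have hπ := pi_pos
  rcases bad3 hbad with ⟨h1, h2, h3⟩ | ⟨h1, h2, h3⟩ | ⟨h1, h2, h3⟩
  · -- g1 = π
    have e12 : a12 = 0 := by linarith
    have e31 : a31 = 0 := by linarith
    have eg2 : g2 = 0 := by linarith
    have eg3 : g3 = 0 := by linarith
    have e23 : a23 = π := by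
      by_contra hne
      have hlt : a23 < π := lt_of_le_of_ne (by linarith) hne
      exact hm4 (mild_mk1 (β := (π - a23) / 2) (by linarith) (by linarith) (by linarith)
        (by linarith) (by linarith))
    exact Or.inl ⟨h1, e23, eg2, eg3, e12, e31⟩
  · -- μ1 = π, g1 = 0
    have hsum' : a31 + a12 = π := by linarith
    have e23 : a23 = 0 := by linarith
    have e12 : a12 = g3 := by linarith
    have e31 : a31 = g2 := by linarith
    have key : a31 = 0 ∨ a31 = π := by
      by_contra hk
      push_neg at hk
      obtain ⟨hk0, hkπ⟩ := hk
      have h0 : 0 < a31 := lt_of_le_of_ne h31 (Ne.symm hk0)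
      have h1' : a31 < π := lt_of_le_of_ne (by linarith) hkπ
      exact hm1 (mild_mk3 (β := a31) (by linarith) (by linarith) (by linarith) h0 h1')
    rcases key with e | e
    · exact Or.inr (Or.inr ⟨by linarith, by linarith, by linarith, by linarith, by linarith,
        by linarith⟩)
    · exact Or.inr (Or.inl ⟨by linarith, by linarith, by linarith, by linarith, by linarith,
        by linarith⟩)
  · exfalso; linarith

theorem badly_degenerate_structure (a12 a23 a31 g1 g2 g3 : ℝ)
    (hbar : InDbar a12 a23 a31 g1 g2 g3) (hni : ¬ InD a12 a23 a31 g1 g2 g3)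
    (hbad : ∃ l ∈ fiveTriples a12 a23 a31 g1 g2 g3, IsBadTriple l)
    (hnomild : ∀ l ∈ fiveTriples a12 a23 a31 g1 g2 g3, ¬ IsMildTriple l) :
    (g1 = π ∧ a23 = π ∧ g2 = 0 ∧ g3 = 0 ∧ a12 = 0 ∧ a31 = 0) ∨
    (g2 = π ∧ a31 = π ∧ g3 = 0 ∧ g1 = 0 ∧ a23 = 0 ∧ a12 = 0) ∨
    (g3 = π ∧ a12 = π ∧ g1 = 0 ∧ g2 = 0 ∧ a31 = 0 ∧ a23 = 0) := by
  obtain ⟨h12, h23, h31, hg1, hg2, hg3, hsum, hc1, hc2, hc3⟩ := hbar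
  have hπ := pi_pos
  have hn1 := hnomild _ (show
    [(π + a31 - a12 - g1) / 2, (π + a12 - a23 - g2) / 2, (π + a23 - a31 - g3) / 2]
      ∈ fiveTriples a12 a23 a31 g1 g2 g3 by simp [fiveTriples])
  have hn3 := hnomild _ (show
    [g1, (π + a31 + a12 - g1) / 2, (π - a31 - a12 - g1) / 2]
      ∈ fiveTriples a12 a23 a31 g1 g2 g3 by simp [fiveTriples])
  have hn4 := hnomild _ (show
    [g2, (π + a12 + a23 - g2) / 2, (π - a12 - a23 - g2) / 2]
      ∈ fiveTriples a12 a23 a31 g1 g2 g3 by simp [fiveTriples])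
  have hn5 := hnomild _ (show
    [g3, (π + a23 + a31 - g3) / 2, (π - a23 - a31 - g3) / 2]
      ∈ fiveTriples a12 a23 a31 g1 g2 g3 by simp [fiveTriples])
  -- rotated versions of the first triple
  have hn1' : ¬ IsMildTriple
      [(π + a12 - a23 - g2) / 2, (π + a23 - a31 - g3) / 2, (π + a31 - a12 - g1) / 2] :=
    fun hm => hn1 (mild_of_perm (rot3 _ _ _) hm)
  have hn1'' : ¬ IsMildTriple
      [(π + a23 - a31 - g3) / 2, (π + a31 - a12 - g1) / 2, (π + a12 - a23 - g2) / 2] :=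
    fun hm => hn1 (mild_of_perm ((rot3 _ _ _).trans (rot3 _ _ _)) hm)
  obtain ⟨l, hl, hb⟩ := hbad
  simp only [fiveTriples, List.mem_cons, List.not_mem_nil, or_false] at hl
  rcases hl with rfl | rfl | rfl | rfl | rfl
  · -- first triple bad
    rcases bad3 hb with ⟨h1, -, -⟩ | ⟨h1, -, -⟩ | ⟨h1, -, -⟩
    · exact Or.inr (Or.inl ⟨by linarith, by linarith, by linarith, by linarith, by linarith,
        by linarith⟩)
    · exact Or.inr (Or.inr ⟨by linarith, by linarith, by linarith, by linarith, by linarith,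
        by linarith⟩)
    · exact Or.inl ⟨by linarith, by linarith, by linarith, by linarith, by linarith,
        by linarith⟩
  · -- second triple bad
    rcases bad3 hb with ⟨h1, -, -⟩ | ⟨h1, -, -⟩ | ⟨h1, -, -⟩
    · exact Or.inr (Or.inr ⟨by linarith, by linarith, by linarith, by linarith, by linarith,
        by linarith⟩)
    · exact Or.inl ⟨by linarith, by linarith, by linarith, by linarith, by linarith,
        by linarith⟩
    · exact Or.inr (Or.inl ⟨by linarith, by linarith, by linarith, by linarith, by linarith,
        by linarith⟩)
  · exact core a12 a23 a31 g1 g2 g3 h12 h23 h31 hg1 hg2 hg3 hsum hc1 hc2 hc3 hn1 hn4 hb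
  · have := core a23 a31 a12 g2 g3 g1 h23 h31 h12 hg2 hg3 hg1 (by linarith)
      hc2 hc3 hc1 hn1' hn5 hb
    rcases this with h | h | h
    exacts [Or.inr (Or.inl h), Or.inr (Or.inr h), Or.inl h]
  · have := core a31 a12 a23 g3 g1 g2 h31 h12 h23 hg3 hg1 hg2 (by linarith)
      hc3 hc1 hc2 hn1'' hn3 hb
    rcases this with h | h | h
    exacts [Or.inr (Or.inr h), Or.inl h, Or.inr (Or.inl h)]
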